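/- Let A ∈ ℝ^{n×n}, B ∈ ℝ^{n×m}, U ⊆ ℝᵐ, X∞ ⊆ ℝⁿ, V_p : ℝⁿ → ℝ with α₁‖y‖² ≤ V_p(y) for all y (α₁ > 0), and let q, ρ ≥ 0 satisfy xᵀQx ≤ q‖x‖² and uᵀRu ≤ ρ‖u‖² for all x, u, where Q ⪰ 0, R ⪰ 0 are symmetric. Suppose there are c > 0 and a function λ* : ℝⁿ → [0,1) such that for every x ∈ X∞ there exists u ∈ U with ‖u‖ ≤ c‖x‖, A x + B u ∈ X∞, and V_p(A x + B u) ≤ λ*(x)² V_p(x). Define the state-dependent weight β*(x) := (q + c²ρ)/(α₁ (1 − λ*(x)²)). Then for every x ∈ X∞ there exists u ∈ U with A x + B u ∈ X∞ and β*(x) V_p(A x + B u) − β*(x) V_p(x) ≤ −ℓ(x,u), where ℓ(x,u) := xᵀQx + uᵀRu. -/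

import Mathlib

open scoped Matrix

/-- (Key inequality for MPC 1b with state-dependent terminal weight.)
Assume `α₁‖y‖² ≤ V_p(y)`, `xᵀQx ≤ q‖x‖²`, `uᵀRu ≤ ρ‖u‖²` (`Q ⪰ 0`, `R ⪰ 0` symmetric,
`q, ρ ≥ 0`), and that every `x ∈ X∞` admits `u ∈ U` with `‖u‖ ≤ c‖x‖`, `Ax + Bu ∈ X∞`
and `V_p(Ax+Bu) ≤ λ*(x)² V_p(x)`, where `λ*(x) ∈ [0,1)`. Then with
`β*(x) := (q + c²ρ)/(α₁(1 − λ*(x)²))`, for every `x ∈ X∞` there is `u ∈ U` with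
`Ax + Bu ∈ X∞` and `β*(x) V_p(Ax+Bu) − β*(x) V_p(x) ≤ −ℓ(x,u)`. -/
theorem stmt_15 {n m : ℕ} (A : Matrix (Fin n) (Fin n) ℝ) (B : Matrix (Fin n) (Fin m) ℝ)
    (U : Set (EuclideanSpace ℝ (Fin m))) (Xinf : Set (EuclideanSpace ℝ (Fin n)))
    (Vp : EuclideanSpace ℝ (Fin n) → ℝ) (α₁ : ℝ) (hα₁ : 0 < α₁)
    (hlow : ∀ y : EuclideanSpace ℝ (Fin n), α₁ * ‖y‖ ^ 2 ≤ Vp y)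
    (Q : Matrix (Fin n) (Fin n) ℝ) (R : Matrix (Fin m) (Fin m) ℝ)
    (hQpsd : Q.PosSemidef) (hRpsd : R.PosSemidef)
    (q ρ : ℝ) (hq : 0 ≤ q) (hρ : 0 ≤ ρ)
    (hQ : ∀ x : EuclideanSpace ℝ (Fin n), (x : Fin n → ℝ) ⬝ᵥ Q.mulVec x ≤ q * ‖x‖ ^ 2)
    (hR : ∀ u : EuclideanSpace ℝ (Fin m), (u : Fin m → ℝ) ⬝ᵥ R.mulVec u ≤ ρ * ‖u‖ ^ 2)
    (c : ℝ) (hc : 0 < c)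
    (lamStar : EuclideanSpace ℝ (Fin n) → ℝ)
    (hlamStar : ∀ x, 0 ≤ lamStar x ∧ lamStar x < 1)
    (hdec : ∀ x ∈ Xinf, ∃ u ∈ U, ‖u‖ ≤ c * ‖x‖ ∧
      (WithLp.toLp 2 (A.mulVec x + B.mulVec u) : EuclideanSpace ℝ (Fin n)) ∈ Xinf ∧
      Vp (WithLp.toLp 2 (A.mulVec x + B.mulVec u) : EuclideanSpace ℝ (Fin n)) ≤ lamStar x ^ 2 * Vp x) :
    ∀ x ∈ Xinf, ∃ u ∈ U,
      (WithLp.toLp 2 (A.mulVec x + B.mulVec u) : EuclideanSpace ℝ (Fin n)) ∈ Xinf ∧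
      (q + c ^ 2 * ρ) / (α₁ * (1 - lamStar x ^ 2)) *
          Vp (WithLp.toLp 2 (A.mulVec x + B.mulVec u) : EuclideanSpace ℝ (Fin n)) -
        (q + c ^ 2 * ρ) / (α₁ * (1 - lamStar x ^ 2)) * Vp x ≤
        -((x : Fin n → ℝ) ⬝ᵥ Q.mulVec x + (u : Fin m → ℝ) ⬝ᵥ R.mulVec u) := by
  intro x hx
  obtain ⟨u, hu, hnorm, hmem, hVp⟩ := hdec x hx
  refine ⟨u, hu, hmem, ?_⟩
  obtain ⟨hl0, hl1⟩ := hlamStar x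
  have hlam2 : lamStar x ^ 2 < 1 := by nlinarith
  have hden : 0 < α₁ * (1 - lamStar x ^ 2) := by nlinarith
  set β := (q + c ^ 2 * ρ) / (α₁ * (1 - lamStar x ^ 2)) with hβ
  have hβ0 : 0 ≤ β := div_nonneg (by nlinarith) hden.le
  have hVx : α₁ * ‖x‖ ^ 2 ≤ Vp x := hlow x
  have hVx0 : 0 ≤ Vp x := le_trans (by positivity) hVx
  have hβeq : β * (α₁ * (1 - lamStar x ^ 2)) = q + c ^ 2 * ρ := by
    rw [hβ]; exact div_mul_cancel₀ _ hden.ne'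
  have h1 : β * Vp (WithLp.toLp 2 (A.mulVec x + B.mulVec u) : EuclideanSpace ℝ (Fin n)) - β * Vp x
      ≤ -(β * ((1 - lamStar x ^ 2) * Vp x)) := by nlinarith
  have hb2 : 0 ≤ β * (1 - lamStar x ^ 2) := mul_nonneg hβ0 (by linarith)
  have h2 : β * ((1 - lamStar x ^ 2) * Vp x) ≥ (q + c ^ 2 * ρ) * ‖x‖ ^ 2 := by
    have := mul_le_mul_of_nonneg_left hVx hb2
    nlinarith
  have h3 : (x : Fin n → ℝ) ⬝ᵥ Q.mulVec x + (u : Fin m → ℝ) ⬝ᵥ R.mulVec u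
      ≤ (q + c ^ 2 * ρ) * ‖x‖ ^ 2 := by
    have h4 := hQ x
    have h5 := hR u
    have h6 : ‖u‖ ^ 2 ≤ c ^ 2 * ‖x‖ ^ 2 := by nlinarith [norm_nonneg u, norm_nonneg x]
    nlinarith
  linarith
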